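/- Let R be a ring. If a chain complex X of R-modules is a filtered colimit of contractible complexes, then X is pure acyclic, i.e., M ⊗ X is acyclic for every R-module M. -/

import Mathlib

/-!
Setup: we work with cochain complexes of modules over a commutative ring,
with the monoidal (total tensor product) structure on complexes.
-/

open CategoryTheory MonoidalCategory Limits HomologicalComplex

noncomputable section

variable (R : Type) [CommRing R]

/-- Tensoring on the right preserves colimits in `ModuleCat R`. -/
instance (Z : ModuleCat R) : PreservesColimits (tensorRight Z) :=
  preservesColimits_of_natIso (F := tensorLeft Z)
    (NatIso.ofComponents (fun X => β_ Z X) (by intros; simp))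

instance : (curriedTensor (ModuleCat R)).Additive where
  map_add := by intros; ext; simp [curriedTensor]

instance (X : ModuleCat R) : ((curriedTensor (ModuleCat R)).obj X).Additive where
  map_add := by intros; simp [curriedTensor]

instance (X₁ X₂ X₃ : GradedObject ℤ (ModuleCat R)) :
    GradedObject.HasGoodTensor₁₂Tensor X₁ X₂ X₃ :=
  fun _ _ => inferInstanceAs (PreservesColimit _ (tensorRight _))

instance (X₁ X₂ X₃ : GradedObject ℤ (ModuleCat R)) :
    GradedObject.HasGoodTensorTensor₂₃ X₁ X₂ X₃ :=
  fun _ _ => inferInstanceAs (PreservesColimit _ (tensorLeft _))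

instance (X₁ X₂ X₃ X₄ : GradedObject ℤ (ModuleCat R)) :
    GradedObject.HasTensor₄ObjExt X₁ X₂ X₃ X₄ :=
  fun _ _ => inferInstanceAs (PreservesColimit _ (tensorLeft _))

instance (X : ModuleCat R) :
    PreservesColimit (Functor.empty.{0} (ModuleCat R)) ((curriedTensor (ModuleCat R)).obj X) :=
  inferInstanceAs (PreservesColimit _ (tensorLeft _))

instance (X : ModuleCat R) :
    PreservesColimit (Functor.empty.{0} (ModuleCat R)) ((curriedTensor (ModuleCat R)).flip.obj X) :=
  inferInstanceAs (PreservesColimit _ (tensorRight _))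

/-- The category of (cochain) complexes of `R`-modules, with its tensor product. -/
abbrev Kx := CochainComplex (ModuleCat R) ℤ

variable {R}

/-- A complex is acyclic (exact) if its homology vanishes in every degree. -/
def IsAcyclic (X : Kx R) : Prop := ∀ n : ℤ, X.ExactAt n

/-- The sphere complex `S^0(M)`: the module `M` concentrated in degree `0`. -/
def sphere0 (M : ModuleCat R) : Kx R :=
  (HomologicalComplex.single (ModuleCat R) (ComplexShape.up ℤ) 0).obj M

namespace PureAcyclicAux

/-- The degreewise tensor functor. -/
abbrev Tfun (M : ModuleCat R) : Kx R ⥤ Kx R :=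
  (tensorLeft M).mapHomologicalComplex (ComplexShape.up ℤ)

instance (M : ModuleCat R) (J : Type) [SmallCategory J] :
    PreservesColimitsOfShape J (Tfun (R := R) M) :=
  preservesColimitsOfShape_of_eval _ (fun n =>
    preservesColimitsOfShape_of_natIso
      (F := HomologicalComplex.eval (ModuleCat R) (ComplexShape.up ℤ) n ⋙ tensorLeft M)
      (NatIso.ofComponents (fun K => Iso.refl _) (by intros; simp; rfl)))

section XIso

variable (M : ModuleCat R) (K : Kx R)

lemma isZero_summand (p q : ℤ) (hp : p ≠ 0) :
    Limits.IsZero ((sphere0 M).X p ⊗ K.X q) := by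
  have h0 : Limits.IsZero ((sphere0 M).X p) :=
    HomologicalComplex.isZero_single_obj_X (ComplexShape.up ℤ) 0 M p hp
  rw [Limits.IsZero.iff_id_eq_zero] at h0 ⊢
  rw [← MonoidalCategory.id_whiskerRight, h0]
  simp

/-- Hom part of the degreewise iso `(sphere0 M ⊗ K).X n ≅ M ⊗ K.X n`. -/
noncomputable def XIsoHom (n : ℤ) :
    (HomologicalComplex.tensorObj (sphere0 M) K).X n ⟶ M ⊗ K.X n :=
  HomologicalComplex.mapBifunctorDesc (fun p q h =>
    if hp : p = 0 then
      (HomologicalComplex.singleObjXIsoOfEq (ComplexShape.up ℤ) 0 M p hp).hom ▷ K.X q ≫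
        eqToHom (by subst hp; rw [show q = n by simpa using h])
    else 0)

/-- Inv part of the degreewise iso. -/
noncomputable def XIsoInv (n : ℤ) :
    M ⊗ K.X n ⟶ (HomologicalComplex.tensorObj (sphere0 M) K).X n :=
  (HomologicalComplex.singleObjXSelf (ComplexShape.up ℤ) 0 M).inv ▷ K.X n ≫
    HomologicalComplex.ιTensorObj (sphere0 M) K 0 n n (zero_add n)

lemma XIso_hom_inv_id (n : ℤ) : XIsoHom M K n ≫ XIsoInv M K n = 𝟙 _ := by
  unfold XIsoInv XIsoHom sphere0
  apply HomologicalComplex.mapBifunctor.hom_ext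
  intro p q h
  by_cases hp : p = 0
  · subst hp
    obtain rfl : q = n := by simpa using h
    simp only [XIsoHom, XIsoInv, HomologicalComplex.ι_mapBifunctorDesc_assoc, dif_pos rfl,
      dite_true, eqToHom_refl, Category.comp_id, Category.id_comp, Category.assoc]
    rw [← MonoidalCategory.comp_whiskerRight_assoc]
    have : (HomologicalComplex.singleObjXIsoOfEq (ComplexShape.up ℤ) 0 M 0 rfl).hom ≫
        (HomologicalComplex.singleObjXSelf (ComplexShape.up ℤ) 0 M).inv = 𝟙 _ :=
      Iso.hom_inv_id _
    rw [this, MonoidalCategory.id_whiskerRight, Category.id_comp]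
  · exact (isZero_summand M K p q hp).eq_of_src _ _

lemma XIso_inv_hom_id (n : ℤ) : XIsoInv M K n ≫ XIsoHom M K n = 𝟙 _ := by
  simp only [XIsoInv, XIsoHom, Category.assoc, HomologicalComplex.ι_mapBifunctorDesc,
    dif_pos rfl, dite_true, eqToHom_refl, Category.comp_id]
  erw [Category.assoc, HomologicalComplex.ι_mapBifunctorDesc]
  
  simp only [dif_pos rfl, dite_true, eqToHom_refl, Category.comp_id]
  
  erw [← MonoidalCategory.comp_whiskerRight]
  have : (HomologicalComplex.singleObjXSelf (ComplexShape.up ℤ) 0 M).inv ≫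
      (HomologicalComplex.singleObjXIsoOfEq (ComplexShape.up ℤ) 0 M 0 rfl).hom = 𝟙 _ :=
    Iso.inv_hom_id _
  erw [this, MonoidalCategory.id_whiskerRight]

lemma sphere_tensor_d₁ (p q n : ℤ) :
    HomologicalComplex.mapBifunctor.d₁ (sphere0 M) K (curriedTensor (ModuleCat R))
      (ComplexShape.up ℤ) p q n = 0 := by
  by_cases h₁ : (ComplexShape.up ℤ).Rel p ((ComplexShape.up ℤ).next p)
  · by_cases h₂ : ComplexShape.π (ComplexShape.up ℤ) (ComplexShape.up ℤ) (ComplexShape.up ℤ)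
        ((ComplexShape.up ℤ).next p, q) = n
    · rw [HomologicalComplex.mapBifunctor.d₁_eq _ _ _ _ h₁ _ _ h₂]
      simp [sphere0]
      exact smul_zero _
    · rw [HomologicalComplex.mapBifunctor.d₁_eq_zero' _ _ _ _ h₁ _ _ h₂]
  · rw [HomologicalComplex.mapBifunctor.d₁_eq_zero _ _ _ _ _ _ _ h₁]

lemma XIsoInv_comm (n m : ℤ) :
    XIsoInv M K n ≫ (HomologicalComplex.tensorObj (sphere0 M) K).d n m =
      ((Tfun M).obj K).d n m ≫ XIsoInv M K m := by
  by_cases hnm : (ComplexShape.up ℤ).Rel n m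
  · simp only [XIsoInv, Category.assoc, HomologicalComplex.mapBifunctor.d_eq,
      Preadditive.comp_add, HomologicalComplex.mapBifunctor.ι_D₁,
      HomologicalComplex.mapBifunctor.ι_D₂, sphere_tensor_d₁, comp_zero, zero_add]
    erw [Category.assoc, Category.assoc, HomologicalComplex.mapBifunctor.ι_D₁,
      HomologicalComplex.mapBifunctor.ι_D₂, sphere_tensor_d₁]
    
    erw [comp_zero, zero_add]
    
    rw [HomologicalComplex.mapBifunctor.d₂_eq _ _ _ _ _ hnm _ (zero_add m)]
    dsimp
    simp only [ComplexShape.ε_zero, one_smul]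
    refine (MonoidalCategory.whisker_exchange_assoc _ _ _).symm.trans ?_
    rfl
  · rw [HomologicalComplex.shape _ _ _ hnm, HomologicalComplex.shape _ _ _ hnm]
    exact comp_zero.trans zero_comp.symm

/-- The iso `sphere0 M ⊗ K ≅ (Tfun M).obj K`. -/
noncomputable def sphereTensorIso : (sphere0 M ⊗ K) ≅ (Tfun M).obj K :=
  (HomologicalComplex.Hom.isoOfComponents
      (fun n => ⟨XIsoInv M K n, XIsoHom M K n, XIso_inv_hom_id M K n, XIso_hom_inv_id M K n⟩)
      (fun n m _ => XIsoInv_comm M K n m)).symm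

end XIso

lemma exactAt_of_homotopy_id_zero {K : Kx R} (h : Homotopy (𝟙 K) 0) (n : ℤ) :
    K.ExactAt n := by
  rw [HomologicalComplex.exactAt_iff_isZero_homology, Limits.IsZero.iff_id_eq_zero]
  have := h.homologyMap_eq n
  simpa using this

/-- Contractibility is inherited by the degreewise tensor product. -/
noncomputable def TfunHomotopy (M : ModuleCat R) {K : Kx R} (h : Homotopy (𝟙 K) 0) :
    Homotopy (𝟙 ((Tfun M).obj K)) (0 : (Tfun M).obj K ⟶ (Tfun M).obj K) :=
  ((Homotopy.ofEq ((Tfun M).map_id K).symm).trans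
    ((tensorLeft M).mapHomotopy h)).trans (Homotopy.ofEq ((Tfun M).map_zero _ _))

/-- A filtered colimit of complexes exact at `n` is exact at `n`. -/
lemma exactAt_colimit (J : Type) [SmallCategory J] [IsFiltered J] (G : J ⥤ Kx R) (n : ℤ)
    (hG : ∀ j, (G.obj j).ExactAt n) : (colimit G).ExactAt n := by
  rw [HomologicalComplex.exactAt_iff, ShortComplex.moduleCat_exact_iff]
  intro x hx
  dsimp at x hx ⊢
  set i := (ComplexShape.up ℤ).prev n with hi
  set k := (ComplexShape.up ℤ).next n with hk
  have hcn : IsColimit ((HomologicalComplex.eval (ModuleCat R) (ComplexShape.up ℤ) n).mapCocone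
      (colimit.cocone G)) := isColimitOfPreserves _ (colimit.isColimit G)
  have hck : IsColimit ((HomologicalComplex.eval (ModuleCat R) (ComplexShape.up ℤ) k).mapCocone
      (colimit.cocone G)) := isColimitOfPreserves _ (colimit.isColimit G)
  obtain ⟨j, y, hy⟩ := Concrete.isColimit_exists_rep
    (G ⋙ HomologicalComplex.eval (ModuleCat R) (ComplexShape.up ℤ) n) hcn x
  dsimp at hy
  have hdxj : (colimit.ι G j).f k ((G.obj j).d n k y) = 0 := by
    have h := congrArg (fun (f : (G.obj j).X n ⟶ (colimit G).X k) => f y)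
      ((colimit.ι G j).comm n k).symm
    dsimp at h
    exact h.trans ((congrArg (fun z => (colimit G).d n k z) hy).trans hx)
  obtain ⟨j', f₁, f₂, hf⟩ := Concrete.isColimit_exists_of_rep_eq
    (G ⋙ HomologicalComplex.eval (ModuleCat R) (ComplexShape.up ℤ) k) hck
    ((G.obj j).d n k y) (0 : (G.obj j).X k) (by dsimp; erw [map_zero]; exact hdxj)
  dsimp at hf
  erw [map_zero] at hf
  have hdy' : (G.obj j').d n k ((G.map f₁).f n y) = 0 := by
    have h := congrArg (fun (f : (G.obj j).X n ⟶ (G.obj j').X k) => f y)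
      ((G.map f₁).comm n k).symm
    dsimp at h
    exact h.symm.trans hf
  have hE := hG j'
  rw [HomologicalComplex.exactAt_iff, ShortComplex.moduleCat_exact_iff] at hE
  obtain ⟨w, hw⟩ := hE ((G.map f₁).f n y) hdy'
  dsimp at hw
  refine ⟨(colimit.ι G j').f i w, ?_⟩
  have h1 := congrArg (fun (f : (G.obj j').X i ⟶ (colimit G).X n) => f w)
    ((colimit.ι G j').comm i n)
  dsimp at h1
  refine h1.trans ?_
  refine (congrArg (fun z => (colimit.ι G j').f n z) hw).trans ?_
  have h2 := congrArg (fun (f : (G.obj j).X n ⟶ (colimit G).X n) => f y)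
    (congrArg (fun (φ : G.obj j ⟶ colimit G) => φ.f n) (colimit.w G f₁))
  dsimp at h2
  exact h2.trans hy

end PureAcyclicAux


/-- If a complex `X` of `R`-modules is a filtered colimit of
contractible complexes, then `X` is pure acyclic, i.e. `M ⊗ X` is acyclic for every
`R`-module `M`. -/
theorem pureAcyclic_of_filtered_colimit_of_contractibles
    (J : Type) [SmallCategory J] [IsFiltered J] (F : J ⥤ Kx R)
    (hF : ∀ j : J, Nonempty (Homotopy (𝟙 (F.obj j)) 0))
    (X : Kx R) (e : X ≅ colimit F) :
    ∀ M : ModuleCat R, IsAcyclic (sphere0 M ⊗ X) := by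
  intro M n
  have h1 : sphere0 M ⊗ X ≅ colimit (F ⋙ PureAcyclicAux.Tfun M) :=
    (tensorLeft (sphere0 M)).mapIso e ≪≫ PureAcyclicAux.sphereTensorIso M (colimit F) ≪≫
      preservesColimitIso (PureAcyclicAux.Tfun M) F
  refine (PureAcyclicAux.exactAt_colimit J (F ⋙ PureAcyclicAux.Tfun M) n ?_).of_iso h1.symm
  intro j
  exact PureAcyclicAux.exactAt_of_homotopy_id_zero
    (PureAcyclicAux.TfunHomotopy M (hF j).some) n
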